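/- Let (p_n) be a sequence in (0,1) with p_n → 0, and consider the randomly oriented complete binary tree T_n of height n with parameter p_n. Then there exists N such that for all n ≥ N and all non-leaf vertices u, v ∈ V_n with neither u a prefix of v nor v a prefix of u, P(X_u ∩ X_v) ≤ P(X_u)·P(X_v) + d(u,v)·ρ^{(n)}_{ℓ(u∨v)}, where d(u,v) is the graph distance between u and v in T_n, u∨v is the longest common prefix of u and v, and ρ^{(n)}_k is defined by ρ_0 = 1, ρ_{k+1} = 2p_n·ρ_k − (p_n·ρ_k)². In particular Cov(1_{X_u}, 1_{X_v}) ≤ d(u,v)·ρ^{(n)}_{ℓ(u∨v)} for such u, v and n ≥ N. -/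

import Mathlib

open MeasureTheory ProbabilityTheory Finset
open scoped Classical

/-- Vertices of the complete binary tree of height `n`: words over `{0,1}`
of length at most `n`.  The empty word is the root; words of length `n`
are the leaves; the level of `v` is `n - |v|`. -/
def Vtx (n : ℕ) : Type := {l : List Bool // l.length ≤ n}

/-- Edges of the complete binary tree of height `n`, indexed by the nonempty
words of length at most `n`: the edge joins such a word to its predecessor
(the word obtained by deleting the last letter). -/
def Edg (n : ℕ) : Type := {l : List Bool // l ≠ [] ∧ l.length ≤ n}

noncomputable instance (n : ℕ) : Fintype (Vtx n) := by
  apply Fintype.ofInjective (fun v : Vtx n => fun i : Fin (n + 1) => v.1[i.1]?)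
  intro u v h
  apply Subtype.ext
  apply List.ext_getElem?
  intro m
  by_cases hm : m < n + 1
  · exact congrFun h ⟨m, hm⟩
  · have hu := u.2
    have hv := v.2
    rw [List.getElem?_eq_none_iff.2, List.getElem?_eq_none_iff.2] <;> omega

noncomputable instance (n : ℕ) : Fintype (Edg n) := by
  apply Fintype.ofInjective (fun v : Edg n => fun i : Fin (n + 1) => v.1[i.1]?)
  intro u v h
  apply Subtype.ext
  apply List.ext_getElem?
  intro m
  by_cases hm : m < n + 1
  · exact congrFun h ⟨m, hm⟩
  · have hu := u.2.2
    have hv := v.2.2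
    rw [List.getElem?_eq_none_iff.2, List.getElem?_eq_none_iff.2] <;> omega

/-- The Bernoulli measure on `Bool`: `true` has probability `p`,
`false` has probability `1 - p`. -/
noncomputable def bern (p : ℝ) : Measure Bool :=
  (ENNReal.ofReal p) • Measure.dirac true + (ENNReal.ofReal (1 - p)) • Measure.dirac false

instance (p : ℝ) : IsFiniteMeasure (bern p) := by
  constructor
  simp only [bern, Measure.add_apply, Measure.smul_apply, smul_eq_mul]
  exact ENNReal.add_lt_top.mpr
    ⟨ENNReal.mul_lt_top ENNReal.ofReal_lt_top (by simp),
     ENNReal.mul_lt_top ENNReal.ofReal_lt_top (by simp)⟩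

/-- The random orientation measure on the complete binary tree of height `n`:
each edge is oriented towards the root (coordinate `true`) with probability `p`,
independently of the other edges. -/
noncomputable def treeMeasure (n : ℕ) (p : ℝ) : Measure (Edg n → Bool) :=
  Measure.pi fun _ => bern p

/-- One oriented step in the configuration `ω`: `a → b` if the tree edge between
`a` and `b` is oriented from `a` to `b` (coordinate `true` means oriented towards
the root, i.e. towards the shorter word). -/
def TStep {n : ℕ} (ω : Edg n → Bool) (a b : Vtx n) : Prop :=
  ∃ e : Edg n, (ω e = true ∧ e.1 = a.1 ∧ b.1 = e.1.dropLast) ∨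
    (ω e = false ∧ e.1 = b.1 ∧ a.1 = e.1.dropLast)

/-- `X v`: the event that water, pumped into the leaves, reaches `v`, i.e. there is
a directed path from some leaf to `v`. -/
def Xwet {n : ℕ} (v : Vtx n) : Set (Edg n → Bool) :=
  {ω | ∃ w : Vtx n, w.1.length = n ∧ Relation.ReflTransGen (TStep ω) w v}

/-- `Y v`: the event that `v` gets wet in downwards percolation: there is a leaf `w`
above `v` such that every edge on the path from `w` down to `v` is oriented
towards the root. -/
def Ydown {n : ℕ} (v : Vtx n) : Set (Edg n → Bool) :=
  {ω | ∃ w : List Bool, w.length = n ∧ v.1 <+: w ∧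
    ∀ u : Edg n, u.1 <+: w → v.1.length < u.1.length → ω u = true}

/-- The recursion `ρ₀ = 1`, `ρ_{k+1} = 2 p ρ_k - (p ρ_k)²`. -/
noncomputable def rho (p : ℝ) : ℕ → ℝ
  | 0 => 1
  | k + 1 => 2 * p * rho p k - (p * rho p k) ^ 2

/-- `α^{(n)}_k`, the probability that water reaches a level-`k` vertex from below. -/
noncomputable def alpha (p : ℝ) (n k : ℕ) : ℝ :=
  (1 - p) * p * ∑ i ∈ Finset.range (n - k),
    (1 - p) ^ i * rho p (k + i) * ∏ j ∈ Finset.range i, (1 - p * rho p (k + j))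

/-- The size of the percolation cluster `C_n` (leaves excluded). -/
noncomputable def clusterSize (n : ℕ) (ω : Edg n → Bool) : ℕ :=
  Nat.card {v : Vtx n // v.1.length < n ∧ ω ∈ Xwet v}

/-- The size of the downwards percolation cluster `C↓_n` (leaves excluded). -/
noncomputable def downClusterSize (n : ℕ) (ω : Edg n → Bool) : ℕ :=
  Nat.card {v : Vtx n // v.1.length < n ∧ ω ∈ Ydown v}

/-- The maximum level reached by water in downwards percolation. -/
noncomputable def maxLevel (n : ℕ) (ω : Edg n → Bool) : ℕ :=
  sSup ({0} ∪ {k | ∃ v : Vtx n, ω ∈ Ydown v ∧ n - v.1.length = k})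

/-- The root of the tree. -/
def root (n : ℕ) : Vtx n := ⟨[], by simp⟩

/-- The longest common prefix of two words. -/
def lcp : List Bool → List Bool → List Bool
  | a :: as, b :: bs => if a = b then a :: lcp as bs else []
  | _, _ => []

section CovAux
open ENNReal

variable {n : ℕ} {p : ℝ}

lemma measSet {n : ℕ} (s : Set (Edg n → Bool)) : MeasurableSet s :=
  s.to_countable.measurableSet

lemma bern_prob {p : ℝ} (h0 : 0 ≤ p) (h1 : p ≤ 1) : IsProbabilityMeasure (bern p) := by
  constructor
  simp [bern, ← ENNReal.ofReal_add h0 (by linarith : (0:ℝ) ≤ 1 - p)]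

lemma bern_true {p : ℝ} : bern p {true} = ENNReal.ofReal p := by
  simp [bern, Measure.dirac_apply' _ (by trivial : MeasurableSet {true})]

lemma tree_prob {n : ℕ} {p : ℝ} (h0 : 0 ≤ p) (h1 : p ≤ 1) :
    IsProbabilityMeasure (treeMeasure n p) := by
  haveI := bern_prob h0 h1
  unfold treeMeasure; infer_instance

lemma indep_Q {n : ℕ} {p : ℝ} (h0 : 0 ≤ p) (h1 : p ≤ 1) (Q : Edg n → Prop)
    (A B : Set (Edg n → Bool))
    (hA : ∀ ω ω' : Edg n → Bool, (∀ e, Q e → ω e = ω' e) → ω ∈ A → ω' ∈ A)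
    (hB : ∀ ω ω' : Edg n → Bool, (∀ e, ¬ Q e → ω e = ω' e) → ω ∈ B → ω' ∈ B) :
    treeMeasure n p (A ∩ B) = treeMeasure n p A * treeMeasure n p B := by
  classical
  haveI := bern_prob h0 h1
  set φ := MeasurableEquiv.piEquivPiSubtypeProd (fun _ : Edg n => Bool) Q with hφdef
  have hmp := measurePreserving_piEquivPiSubtypeProd (fun _ : Edg n => bern p) Q
  have hsymm : ∀ (f : ∀ _ : Subtype Q, Bool) (g : ∀ _ : {e : Edg n // ¬ Q e}, Bool) (e : Edg n),
      φ.symm (f, g) e = if h : Q e then f ⟨e, h⟩ else g ⟨e, h⟩ := by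
    intro f g e
    simp [hφdef, MeasurableEquiv.piEquivPiSubtypeProd, MeasurableEquiv.symm,
      Equiv.piEquivPiSubtypeProd]
  have happ : ∀ (ω : Edg n → Bool),
      φ ω = (fun e : Subtype Q => ω e, fun e : {e : Edg n // ¬ Q e} => ω e) := by
    intro ω
    rfl
  set A₁ : Set (∀ _ : Subtype Q, Bool) := {f | φ.symm (f, fun _ => true) ∈ A} with hA₁
  set B₁ : Set (∀ _ : {e : Edg n // ¬ Q e}, Bool) := {g | φ.symm (fun _ => true, g) ∈ B} with hB₁
  have memA : ∀ ω : Edg n → Bool, ω ∈ A ↔ (fun e : Subtype Q => ω e) ∈ A₁ := by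
    intro ω
    constructor
    · intro h
      exact hA ω _ (fun e hQ => by rw [hsymm]; simp [hQ]) h
    · intro h
      refine hA _ ω (fun e hQ => by rw [hsymm]; simp [hQ]) h
  have memB : ∀ ω : Edg n → Bool, ω ∈ B ↔ (fun e : {e : Edg n // ¬ Q e} => ω e) ∈ B₁ := by
    intro ω
    constructor
    · intro h
      exact hB ω _ (fun e hQ => by rw [hsymm]; simp [hQ]) h
    · intro h
      refine hB _ ω (fun e hQ => by rw [hsymm]; simp [hQ]) h
  have hAeq : A = φ ⁻¹' (A₁ ×ˢ Set.univ) := by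
    ext ω
    simp only [Set.mem_preimage, happ ω, Set.mem_prod, Set.mem_univ, and_true]
    exact memA ω
  have hBeq : B = φ ⁻¹' (Set.univ ×ˢ B₁) := by
    ext ω
    simp only [Set.mem_preimage, happ ω, Set.mem_prod, Set.mem_univ, true_and]
    exact memB ω
  have hmap : ∀ S : Set ((∀ _ : Subtype Q, Bool) × (∀ _ : {e : Edg n // ¬ Q e}, Bool)),
      treeMeasure n p (φ ⁻¹' S) =
        ((Measure.pi fun _ : Subtype Q => bern p).prod
          (Measure.pi fun _ : {e : Edg n // ¬ Q e} => bern p)) S := by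
    intro S
    rw [← hmp.map_eq, Measure.map_apply (MeasurableEquiv.measurable φ)
      (S.to_countable.measurableSet)]
    rfl
  haveI : IsProbabilityMeasure (Measure.pi fun _ : Subtype Q => bern p) := by infer_instance
  haveI : IsProbabilityMeasure (Measure.pi fun _ : {e : Edg n // ¬ Q e} => bern p) := by
    infer_instance
  have h1' : A ∩ B = φ ⁻¹' (A₁ ×ˢ B₁) := by
    rw [hAeq, hBeq, ← Set.preimage_inter, Set.prod_inter_prod, Set.univ_inter, Set.inter_univ]
  rw [h1', hAeq, hBeq, hmap, hmap, hmap, Measure.prod_prod, Measure.prod_prod, Measure.prod_prod]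
  simp [mul_comm, mul_assoc, mul_left_comm, measure_univ]

end CovAux
section CovAux2
open ENNReal

lemma prefix_trans_of_le {a b w : List Bool} (ha : a <+: w) (hb : b <+: w)
    (h : a.length ≤ b.length) : a <+: b := by
  have : b.take a.length = a := by
    rw [List.prefix_iff_eq_take.mp hb, List.take_take, min_eq_left h,
      ← List.prefix_iff_eq_take.mp ha]
  exact this ▸ List.take_prefix _ _

lemma rho_mem {p : ℝ} (h0 : 0 ≤ p) (h1 : p ≤ 1) : ∀ k, 0 ≤ rho p k ∧ rho p k ≤ 1
  | 0 => by simp [rho]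
  | k+1 => by
    obtain ⟨ha, hb⟩ := rho_mem h0 h1 k
    have hx0 : 0 ≤ p * rho p k := mul_nonneg h0 ha
    have hx1 : p * rho p k ≤ 1 := mul_le_one₀ h1 ha hb
    simp only [rho]
    constructor <;> nlinarith [sq_nonneg (1 - p * rho p k)]

lemma coord_true {n : ℕ} {p : ℝ} (h0 : 0 ≤ p) (h1 : p ≤ 1) (e₀ : Edg n) :
    treeMeasure n p {ω | ω e₀ = true} = ENNReal.ofReal p := by
  classical
  haveI := bern_prob h0 h1
  have hset : {ω : Edg n → Bool | ω e₀ = true} =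
      Set.pi Set.univ (fun e => if e = e₀ then {true} else Set.univ) := by
    ext ω
    simp only [Set.mem_setOf_eq, Set.mem_pi, Set.mem_univ, forall_true_left]
    constructor
    · intro h e; by_cases he : e = e₀ <;> simp [he, h]
    · intro h; have := h e₀; simpa using this
  rw [hset, treeMeasure, Measure.pi_pi]
  rw [Finset.prod_eq_single e₀ (fun b _ hb => by rw [if_neg hb]; exact measure_univ)
    (fun h => absurd (Finset.mem_univ e₀) h)]
  simp [bern_true]

/-- Downward-percolation event, in terms of the word. -/
def YDl (n : ℕ) (a : List Bool) : Set (Edg n → Bool) :=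
  {ω | ∃ w : List Bool, w.length = n ∧ a <+: w ∧
    ∀ u : Edg n, u.1 <+: w → a.length < u.1.length → ω u = true}

/-- All edges on the path from `a` down to `v` oriented away from the root. -/
def DNl (n : ℕ) (a v : List Bool) : Set (Edg n → Bool) :=
  {ω | ∀ e : Edg n, e.1 <+: v → a.length < e.1.length → ω e = false}

lemma ydown_measure {n : ℕ} {p : ℝ} (h0 : 0 ≤ p) (h1 : p ≤ 1) :
    ∀ (k : ℕ) (a : List Bool), a.length ≤ n → n - a.length = k →
      treeMeasure n p (YDl n a) = ENNReal.ofReal (rho p k) := by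
  haveI := tree_prob (n := n) h0 h1
  intro k
  induction k with
  | zero =>
    intro a hle hk
    have hlen : a.length = n := by omega
    have huniv : YDl n a = Set.univ := by
      ext ω
      simp only [Set.mem_univ, iff_true, YDl, Set.mem_setOf_eq]
      exact ⟨a, hlen, List.prefix_refl a, fun u hu hlt =>
        absurd hu.length_le (by omega)⟩
    rw [huniv, measure_univ]; simp [rho]
  | succ k ih =>
    intro a hle hk
    have hlt : a.length < n := by omega
    have hbne : ∀ b : Bool, (a ++ [b]) ≠ [] := by simp
    have hblen : ∀ b : Bool, (a ++ [b]).length ≤ n := by simp; omega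
    set eb : Bool → Edg n := fun b => ⟨a ++ [b], hbne b, hblen b⟩ with hebdef
    set S : Bool → Set (Edg n → Bool) :=
      fun b => {ω | ω (eb b) = true} ∩ YDl n (a ++ [b]) with hSdef
    have hsplit : YDl n a = S false ∪ S true := by
      ext ω
      constructor
      · rintro ⟨w, hw, haw, hedges⟩
        have hwa : a = w.take a.length := List.prefix_iff_eq_take.mp haw
        have hidx : a.length < w.length := by omega
        set b : Bool := w[a.length] with hbdef
        have htake : w.take (a.length + 1) = a ++ [b] := by
          rw [← List.take_concat_get' w a.length hidx, ← hwa]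
        clear_value b
        have hpre : (a ++ [b]) <+: w := htake ▸ List.take_prefix _ _
        have hmem : ω ∈ S b := by
          constructor
          · exact hedges (eb b) hpre (by simp [hebdef])
          · exact ⟨w, hw, hpre, fun u hu hlt' => hedges u hu (by simp at hlt'; omega)⟩
        revert hmem
        cases b
        · exact fun hmem => Or.inl hmem
        · exact fun hmem => Or.inr hmem
      · intro hw
        have key : ∀ b : Bool, ω ∈ S b → ω ∈ YDl n a := by
          rintro b ⟨htrue, w, hw', hpre, hedges⟩
          refine ⟨w, hw', (List.prefix_append a _).trans hpre, fun u hu hlt' => ?_⟩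
          rcases Nat.lt_or_ge (a.length + 1) u.1.length with h' | h'
          · exact hedges u hu (by simp; omega)
          · have hlen' : u.1.length = a.length + 1 := by omega
            have : u.1 = a ++ [b] := by
              refine List.IsPrefix.eq_of_length
                (prefix_trans_of_le hu hpre (by simp; omega)) (by simp; omega)
            have : u = eb b := Subtype.ext this
            rw [this]; exact htrue
        exact Or.elim hw (key false) (key true)
    have hSb : ∀ b : Bool, treeMeasure n p (S b) = ENNReal.ofReal (p * rho p k) := by
      intro b
      have hind : treeMeasure n p ({ω : Edg n → Bool | ω (eb b) = true} ∩ YDl n (a ++ [b])) =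
          treeMeasure n p {ω : Edg n → Bool | ω (eb b) = true} *
            treeMeasure n p (YDl n (a ++ [b])) := by
        apply indep_Q h0 h1 (fun e => e.1 = a ++ [b])
        · intro ω ω' hag hω
          have := hag (eb b) rfl
          simp only [Set.mem_setOf_eq] at hω ⊢
          rw [← this]; exact hω
        · rintro ω ω' hag ⟨w, hw', hpre, hedges⟩
          refine ⟨w, hw', hpre, fun u hu hlt' => ?_⟩
          rw [← hag u (by intro hq; rw [hq] at hlt'; simp at hlt')]
          exact hedges u hu hlt'
      rw [hSdef]
      simp only []
      rw [hind, coord_true h0 h1, ih (a ++ [b]) (hblen b) (by simp; omega)]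
      rw [← ENNReal.ofReal_mul h0]
    have hcross : treeMeasure n p (S false ∩ S true) =
        ENNReal.ofReal (p * rho p k) * ENNReal.ofReal (p * rho p k) := by
      have hdistinct : ∀ u : List Bool, (a ++ [false]) <+: u → (a ++ [true]) <+: u → False := by
        intro u h1' h2'
        have := List.IsPrefix.eq_of_length (prefix_trans_of_le h1' h2' (by simp)) (by simp)
        simp at this
      have hind := indep_Q h0 h1 (fun e : Edg n => (a ++ [false]) <+: e.1) (S false) (S true)
        (by
          rintro ω ω' hag ⟨htrue, w, hw', hpre, hedges⟩
          refine ⟨?_, w, hw', hpre, fun u hu hlt' => ?_⟩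
          · simp only [Set.mem_setOf_eq] at htrue ⊢
            rw [← hag (eb false) (List.prefix_refl _)]; exact htrue
          · rw [← hag u (prefix_trans_of_le hpre hu hlt'.le)]
            exact hedges u hu hlt'
          )
        (by
          rintro ω ω' hag ⟨htrue, w, hw', hpre, hedges⟩
          refine ⟨?_, w, hw', hpre, fun u hu hlt' => ?_⟩
          · simp only [Set.mem_setOf_eq] at htrue ⊢
            rw [← hag (eb true) (by intro hq; exact hdistinct _ hq (List.prefix_refl _))]
            exact htrue
          · rw [← hag u (by
              intro hq
              exact hdistinct u.1 hq (prefix_trans_of_le hpre hu hlt'.le))]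
            exact hedges u hu hlt'
          )
      rw [hind, hSb false, hSb true]
    have hincl : treeMeasure n p (S false ∪ S true) + treeMeasure n p (S false ∩ S true) =
        treeMeasure n p (S false) + treeMeasure n p (S true) :=
      measure_union_add_inter _ (measSet _)
    rw [hsplit]
    have hx0 : 0 ≤ p * rho p k := mul_nonneg h0 (rho_mem h0 h1 k).1
    have hx1 : p * rho p k ≤ 1 := by
      have := (rho_mem h0 h1 k).2
      nlinarith [(rho_mem h0 h1 k).1]
    have hrho1 : 0 ≤ rho p (k+1) := (rho_mem h0 h1 (k+1)).1
    have key : ENNReal.ofReal (rho p (k+1)) + treeMeasure n p (S false ∩ S true) =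
        treeMeasure n p (S false) + treeMeasure n p (S true) := by
      rw [hcross, hSb, hSb, ← ENNReal.ofReal_mul hx0, ← ENNReal.ofReal_add hrho1 (by nlinarith),
        ← ENNReal.ofReal_add hx0 hx0]
      congr 1
      simp only [rho]
      ring
    have hfin : treeMeasure n p (S false ∩ S true) ≠ ⊤ := measure_ne_top _ _
    exact WithTop.add_right_cancel hfin (hincl.trans key.symm)

end CovAux2
section CovAux3

lemma prefix_dropLast {a w : List Bool} (h : a <+: w) (hlt : a.length < w.length) :
    a <+: w.dropLast := by
  have : w.dropLast.take a.length = a := by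
    rw [List.dropLast_eq_take, List.take_take, min_eq_left (by omega),
      ← List.prefix_iff_eq_take.mp h]
  exact this ▸ List.take_prefix _ _

lemma walk_struct {n : ℕ} {ω : Edg n → Bool} {w v : Vtx n}
    (h : Relation.ReflTransGen (TStep ω) w v) :
    ∃ a : List Bool, a <+: w.1 ∧ a <+: v.1 ∧
      (∀ e : Edg n, e.1 <+: w.1 → a.length < e.1.length → ω e = true) ∧
      (∀ e : Edg n, e.1 <+: v.1 → a.length < e.1.length → ω e = false) := by
  induction h using Relation.ReflTransGen.head_induction_on with
  | refl =>
    exact ⟨v.1, List.prefix_refl _, List.prefix_refl _,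
      fun e he hlt => absurd he.length_le (by omega),
      fun e he hlt => absurd he.length_le (by omega)⟩
  | head hstep _ ih =>
    rename_i b c _
    obtain ⟨a₁, hac, hav, hup, hdn⟩ := ih
    obtain ⟨e, he⟩ := hstep
    rcases he with ⟨het, heb, hcd⟩ | ⟨hef, hec, hbd⟩
    · -- upward step : c = parent of b
      have hcpre : c.1 <+: b.1 := by rw [hcd, heb]; exact List.dropLast_prefix _
      have hbne : b.1 ≠ [] := heb ▸ e.2.1
      have hclen : c.1.length = b.1.length - 1 := by
        rw [hcd, List.length_dropLast, heb]
      have hblen : 0 < b.1.length := List.length_pos_iff.mpr hbne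
      refine ⟨a₁, hac.trans hcpre, hav, ?_, hdn⟩
      intro e' he' hlt
      by_cases hl : e'.1.length = b.1.length
      · have h1 : e'.1 = b.1 := he'.eq_of_length hl
        have : e' = e := Subtype.ext (h1.trans heb.symm)
        rw [this]; exact het
      · have hlt2 : e'.1.length < b.1.length := lt_of_le_of_ne he'.length_le hl
        have : e'.1 <+: c.1 := by
          rw [hcd, heb]
          exact prefix_dropLast he' hlt2
        exact hup e' this hlt
    · -- downward step : b = parent of c
      have hbpre : b.1 <+: c.1 := by rw [hbd, hec]; exact List.dropLast_prefix _
      have hcne : c.1 ≠ [] := hec ▸ e.2.1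
      have hclen : 0 < c.1.length := List.length_pos_iff.mpr hcne
      have hblen : b.1.length = c.1.length - 1 := by
        rw [hbd, List.length_dropLast, hec]
      by_cases hcase : a₁.length ≤ b.1.length
      · refine ⟨a₁, prefix_trans_of_le hac hbpre hcase, hav, ?_, hdn⟩
        intro e' he' hlt
        exact hup e' (he'.trans hbpre) hlt
      · have haeq : a₁ = c.1 := hac.eq_of_length (by
          have := hac.length_le; omega)
        have hcv : c.1 <+: v.1 := by rw [← haeq]; exact hav
        refine ⟨b.1, List.prefix_refl _, hbpre.trans hcv, ?_, ?_⟩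
        · intro e' he' hlt
          exact absurd he'.length_le (by omega)
        · intro e' he' hlt
          by_cases hl : e'.1.length ≤ c.1.length
          · have h1 : e'.1 = c.1 :=
              (prefix_trans_of_le he' hcv hl).eq_of_length (by omega)
            have : e' = e := Subtype.ext (h1.trans hec.symm)
            rw [this]; exact hef
          · exact hdn e' he' (by rw [haeq]; omega)

lemma walk_up {n : ℕ} {ω : Edg n → Bool} :
    ∀ (k : ℕ) (w a : List Bool) (hw : w.length ≤ n) (ha : a <+: w),
      w.length - a.length = k →
      (∀ e : Edg n, e.1 <+: w → a.length < e.1.length → ω e = true) →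
      Relation.ReflTransGen (TStep ω) ⟨w, hw⟩ ⟨a, ha.length_le.trans hw⟩ := by
  intro k
  induction k with
  | zero =>
    intro w a hw ha hk _
    have : a = w := ha.eq_of_length (by have := ha.length_le; omega)
    subst this
    exact Relation.ReflTransGen.refl
  | succ k ih =>
    intro w a hw ha hk hedges
    have hlen : a.length < w.length := by
      have := ha.length_le; omega
    have hwne : w ≠ [] := List.ne_nil_of_length_pos (by omega)
    have hdl : w.dropLast.length ≤ n := by rw [List.length_dropLast]; omega
    have hstep : TStep ω ⟨w, hw⟩ ⟨w.dropLast, hdl⟩ :=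
      ⟨⟨w, hwne, hw⟩, Or.inl ⟨hedges ⟨w, hwne, hw⟩ (List.prefix_refl w) hlen, rfl, rfl⟩⟩
    have hrest := ih w.dropLast a hdl (prefix_dropLast ha hlen)
      (by rw [List.length_dropLast]; omega)
      (fun e he hlt => hedges e (he.trans (List.dropLast_prefix w)) hlt)
    exact Relation.ReflTransGen.head hstep hrest

lemma walk_down {n : ℕ} {ω : Edg n → Bool} :
    ∀ (k : ℕ) (a v : List Bool) (hv : v.length ≤ n) (ha : a <+: v),
      v.length - a.length = k →
      (∀ e : Edg n, e.1 <+: v → a.length < e.1.length → ω e = false) →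
      Relation.ReflTransGen (TStep ω) ⟨a, ha.length_le.trans hv⟩ ⟨v, hv⟩ := by
  intro k
  induction k with
  | zero =>
    intro a v hv ha hk _
    have : a = v := ha.eq_of_length (by have := ha.length_le; omega)
    subst this
    exact Relation.ReflTransGen.refl
  | succ k ih =>
    intro a v hv ha hk hedges
    have hlen : a.length < v.length := by
      have := ha.length_le; omega
    have hvne : v ≠ [] := List.ne_nil_of_length_pos (by omega)
    have hdl : v.dropLast.length ≤ n := by rw [List.length_dropLast]; omega
    have hstep : TStep ω ⟨v.dropLast, hdl⟩ ⟨v, hv⟩ :=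
      ⟨⟨v, hvne, hv⟩, Or.inr ⟨hedges ⟨v, hvne, hv⟩ (List.prefix_refl v) hlen, rfl, rfl⟩⟩
    have hrest := ih a v.dropLast hdl (prefix_dropLast ha hlen)
      (by rw [List.length_dropLast]; omega)
      (fun e he hlt => hedges e (he.trans (List.dropLast_prefix v)) hlt)
    exact Relation.ReflTransGen.tail hrest hstep

lemma xwet_iff {n : ℕ} {ω : Edg n → Bool} (u : Vtx n) :
    ω ∈ Xwet u ↔ ∃ a : List Bool, a <+: u.1 ∧ ω ∈ YDl n a ∧ ω ∈ DNl n a u.1 := by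
  constructor
  · rintro ⟨w, hwlen, hwalk⟩
    obtain ⟨a, haw, hau, hup, hdn⟩ := walk_struct hwalk
    exact ⟨a, hau, ⟨w.1, hwlen, haw, hup⟩, hdn⟩
  · rintro ⟨a, hau, ⟨w, hwlen, haw, hup⟩, hdn⟩
    refine ⟨⟨w, le_of_eq hwlen⟩, hwlen, ?_⟩
    have h1 := walk_up (ω := ω) (w.length - a.length) w a (le_of_eq hwlen) haw rfl hup
    have h2 := walk_down (ω := ω) (u.1.length - a.length) a u.1 u.2 hau rfl hdn
    exact h1.trans h2

lemma lcp_prefix_left : ∀ a b : List Bool, lcp a b <+: a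
  | [], _ => by simp [lcp]
  | _ :: _, [] => by simp [lcp]
  | a :: as, b :: bs => by
    by_cases h : a = b
    · subst h
      have h2 : a :: lcp as bs <+: a :: as :=
        List.cons_prefix_cons.mpr ⟨rfl, lcp_prefix_left as bs⟩
      simpa [lcp] using h2
    · simp [lcp, h]

lemma lcp_prefix_right : ∀ a b : List Bool, lcp a b <+: b
  | [], _ => by simp [lcp]
  | _ :: _, [] => by simp [lcp]
  | a :: as, b :: bs => by
    by_cases h : a = b
    · subst h
      have h2 : a :: lcp as bs <+: a :: bs :=
        List.cons_prefix_cons.mpr ⟨rfl, lcp_prefix_right as bs⟩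
      simpa [lcp] using h2
    · simp [lcp, h]

lemma prefix_lcp : ∀ (c a b : List Bool), c <+: a → c <+: b → c <+: lcp a b
  | [], _, _, _, _ => List.nil_prefix
  | x :: cs, a, b, ha, hb => by
    match a, b with
    | [], _ => exact absurd ha (by simp)
    | _ :: _, [] => exact absurd hb (by simp)
    | y :: as, z :: bs =>
      obtain ⟨rfl, ha'⟩ := List.cons_prefix_cons.mp ha
      obtain ⟨rfl, hb'⟩ := List.cons_prefix_cons.mp hb
      have h2 : x :: cs <+: x :: lcp as bs :=
        List.cons_prefix_cons.mpr ⟨rfl, prefix_lcp cs as bs ha' hb'⟩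
      simpa [lcp] using h2

end CovAux3
section CovAux4
open ENNReal

lemma rho_step {p : ℝ} (h0 : 0 ≤ p) (h5 : p ≤ 1/5) (t : ℕ) :
    p * rho p t ≤ rho p (t + 1) := by
  have h1 : p ≤ 1 := by linarith
  obtain ⟨ha, hb⟩ := rho_mem h0 h1 t
  have hx0 : 0 ≤ p * rho p t := mul_nonneg h0 ha
  have hx1 : p * rho p t ≤ 1 := mul_le_one₀ h1 ha hb
  have e1 : rho p (t + 1) = 2 * p * rho p t - (p * rho p t) ^ 2 := rfl
  nlinarith

lemma rho_step2 {p : ℝ} (h0 : 0 ≤ p) (h5 : p ≤ 1/5) (K : ℕ) :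
    rho p (K + 2) + p * rho p K ≤ rho p (K + 1) := by
  have h1 : p ≤ 1 := by linarith
  obtain ⟨haK, hbK⟩ := rho_mem h0 h1 K
  obtain ⟨ha1, hb1⟩ := rho_mem h0 h1 (K + 1)
  have hx0 : 0 ≤ p * rho p K := mul_nonneg h0 haK
  have hx5 : p * rho p K ≤ 1/5 := by nlinarith
  have e1 : rho p (K + 1) = 2 * p * rho p K - (p * rho p K) ^ 2 := rfl
  have e2 : rho p (K + 2) = 2 * p * rho p (K + 1) - (p * rho p (K + 1)) ^ 2 := rfl
  have f1 : 0 ≤ (p * rho p K) * (1/5 - p * rho p K) := mul_nonneg hx0 (by linarith)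
  have f2 : 0 ≤ (1/5 - p) * rho p (K + 1) := mul_nonneg (by linarith) ha1
  have f3 : 0 ≤ (p * rho p (K + 1)) ^ 2 := sq_nonneg _
  nlinarith

lemma rho_sum' {p : ℝ} (h0 : 0 ≤ p) (h5 : p ≤ 1/5) :
    ∀ (M n : ℕ), M < n →
      ∑ i ∈ Finset.range (M + 1), p * rho p (n - i - 1) ≤ rho p (n - M) := by
  intro M
  induction M with
  | zero =>
    intro n hn
    rw [Finset.sum_range_one]
    obtain ⟨t, rfl⟩ : ∃ t, n = t + 1 := ⟨n - 1, by omega⟩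
    simpa using rho_step h0 h5 t
  | succ M ih =>
    intro n hn
    rw [Finset.sum_range_succ]
    have hMn : M < n := by omega
    obtain ⟨K, hK⟩ : ∃ K, n = M + 2 + K := ⟨n - M - 2, by omega⟩
    have e1 : n - M = K + 2 := by omega
    have e2 : n - (M + 1) = K + 1 := by omega
    have e3 : n - (M + 1) - 1 = K := by omega
    calc ∑ i ∈ Finset.range (M + 1), p * rho p (n - i - 1) + p * rho p (n - (M + 1) - 1)
        ≤ rho p (n - M) + p * rho p (n - (M + 1) - 1) := by
          have := ih n hMn; linarith
      _ = rho p (K + 2) + p * rho p K := by rw [e1, e3]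
      _ ≤ rho p (K + 1) := rho_step2 h0 h5 K
      _ = rho p (n - (M + 1)) := by rw [e2]

lemma xwet_decomp {n : ℕ} {ω : Edg n → Bool} (u : Vtx n) (m : List Bool) (hmu : m <+: u.1)
    (hω : ω ∈ Xwet u) :
    ω ∈ {ω : Edg n → Bool | ∃ a : List Bool, a <+: u.1 ∧ m.length < a.length ∧
          ω ∈ YDl n a ∧ ω ∈ DNl n a u.1} ∪
        ⋃ i ∈ Finset.range (m.length + 1), (YDl n (m.take i) ∩ DNl n (m.take i) u.1) := by
  obtain ⟨a, hau, hyd, hdn⟩ := (xwet_iff u).mp hω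
  by_cases hcase : m.length < a.length
  · exact Or.inl ⟨a, hau, hcase, hyd, hdn⟩
  · right
    have ham : a <+: m := prefix_trans_of_le hau hmu (by omega)
    have hma : m.take a.length = a := (List.prefix_iff_eq_take.mp ham).symm
    refine Set.mem_iUnion₂.mpr ⟨a.length, ?_, ?_⟩
    · simp only [Finset.mem_range]
      have := ham.length_le; omega
    · rw [hma]; exact ⟨hyd, hdn⟩

lemma A_subset_xwet {n : ℕ} (u : Vtx n) (m : List Bool) :
    {ω : Edg n → Bool | ∃ a : List Bool, a <+: u.1 ∧ m.length < a.length ∧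
      ω ∈ YDl n a ∧ ω ∈ DNl n a u.1} ⊆ Xwet u := by
  rintro ω ⟨a, hau, _, hyd, hdn⟩
  exact (xwet_iff u).mpr ⟨a, hau, hyd, hdn⟩

lemma B_bound {n : ℕ} {p : ℝ} (h0 : 0 ≤ p) (h1 : p ≤ 1) (h5 : p ≤ 1/5)
    (u : Vtx n) (m : List Bool) (hmu : m <+: u.1) (hlen : m.length < u.1.length) :
    treeMeasure n p (⋃ i ∈ Finset.range (m.length + 1),
      (YDl n (m.take i) ∩ DNl n (m.take i) u.1)) ≤
    ENNReal.ofReal (rho p (n - m.length)) := by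
  have hun : u.1.length ≤ n := u.2
  have hMn : m.length < n := by omega
  refine le_trans (measure_biUnion_finset_le _ _) ?_
  have hterm : ∀ i ∈ Finset.range (m.length + 1),
      treeMeasure n p (YDl n (m.take i) ∩ DNl n (m.take i) u.1) ≤
        ENNReal.ofReal (p * rho p (n - i - 1)) := by
    intro i hi
    have hiM : i ≤ m.length := by
      have := Finset.mem_range.mp hi; omega
    have hiu : i < u.1.length := by omega
    set a : List Bool := m.take i with hadef
    have halen : a.length = i := by
      rw [hadef, List.length_take]; omega
    have hau : a <+: u.1 := (List.take_prefix i m).trans hmu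
    have haut : a = u.1.take i := by
      rw [List.prefix_iff_eq_take.mp hau, halen]
    set b : Bool := u.1[i]'hiu with hbdef
    clear_value b
    have hc'ne : (a ++ [!b]) ≠ [] := by simp
    have hc'len : (a ++ [!b]).length ≤ n := by
      simp only [List.length_append, List.length_singleton, halen]; omega
    set ec : Edg n := ⟨a ++ [!b], hc'ne, hc'len⟩ with hecdef
    have hsub : YDl n a ∩ DNl n a u.1 ⊆
        ({ω : Edg n → Bool | ω ec = true} ∩ YDl n (a ++ [!b])) := by
      rintro ω ⟨⟨w, hwl, haw, hup⟩, hdn⟩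
      have hiw : i < w.length := by omega
      set d : Bool := w[i]'hiw with hddef
      clear_value d
      have hawt : a = w.take i := by
        rw [List.prefix_iff_eq_take.mp haw, halen]
      have htake : w.take (i + 1) = a ++ [d] := by
        rw [← List.take_concat_get' w i hiw, ← hawt, hddef]
      have hpre : (a ++ [d]) <+: w := htake ▸ List.take_prefix (i + 1) w
      have hdne : d ≠ b := by
        intro hdb
        have hcu : (a ++ [b]) <+: u.1 := by
          rw [haut, hbdef, List.take_concat_get' u.1 i hiu]
          exact List.take_prefix _ _
        have hbne : (a ++ [b]) ≠ [] := by simp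
        have hblen2 : (a ++ [b]).length ≤ n := by
          simp only [List.length_append, List.length_singleton, halen]; omega
        have hpre2 : (a ++ [b]) <+: w := by rw [← hdb]; exact hpre
        have htrue : ω ⟨a ++ [b], hbne, hblen2⟩ = true := by
          apply hup _ hpre2
          simp [halen]
        have hfalse : ω ⟨a ++ [b], hbne, hblen2⟩ = false := by
          apply hdn _ hcu
          simp [halen]
        rw [htrue] at hfalse
        exact Bool.noConfusion hfalse
      have hdb : d = !b := by
        cases b <;> cases d <;> simp_all
      rw [hdb] at hpre
      constructor
      · exact hup ec hpre (by simp [halen, hecdef])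
      · refine ⟨w, hwl, hpre, fun u' hu' hlt => hup u' hu' ?_⟩
        simp only [List.length_append, List.length_singleton, halen] at hlt
        omega
    have heq : treeMeasure n p ({ω : Edg n → Bool | ω ec = true} ∩ YDl n (a ++ [!b])) =
        ENNReal.ofReal p * ENNReal.ofReal (rho p (n - (i + 1))) := by
      have hind := indep_Q h0 h1 (fun e : Edg n => e.1 = a ++ [!b])
        {ω : Edg n → Bool | ω ec = true} (YDl n (a ++ [!b]))
        (by
          intro ω ω' hag hω
          simp only [Set.mem_setOf_eq] at hω ⊢
          rw [← hag ec rfl]; exact hω)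
        (by
          rintro ω ω' hag ⟨w, hwl, hpre, hup⟩
          refine ⟨w, hwl, hpre, fun u' hu' hlt => ?_⟩
          rw [← hag u' (by
            intro hq
            rw [hq] at hlt
            simp at hlt)]
          exact hup u' hu' hlt)
      rw [hind, coord_true h0 h1, ydown_measure h0 h1 (n - (i + 1)) (a ++ [!b])
        hc'len (by simp only [List.length_append, List.length_singleton, halen])]
    refine le_trans (measure_mono hsub) (le_of_eq ?_)
    rw [heq, ← ENNReal.ofReal_mul h0]
    congr 2
  refine le_trans (Finset.sum_le_sum hterm) ?_
  rw [← ENNReal.ofReal_sum_of_nonneg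
    (fun i _ => mul_nonneg h0 (rho_mem h0 h1 _).1)]
  apply ENNReal.ofReal_le_ofReal
  exact rho_sum' h0 h5 m.length n hMn

end CovAux4
/-- **Covariance bound for incomparable vertices.**
If `p_n → 0`, then for `n` large enough and all non-leaf vertices `u, v` with
neither a prefix of the other,
`P(X_u ∩ X_v) ≤ P(X_u) P(X_v) + d(u,v) ρ_{ℓ(u ∨ v)}`; in particular
`Cov(1_{X_u}, 1_{X_v}) ≤ d(u,v) ρ_{ℓ(u ∨ v)}`.  Here `u ∨ v` is the longest
common prefix of `u` and `v`, whose level is `n - |u ∨ v|`, and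
`d(u,v) = |u| + |v| - 2 |u ∨ v|` is the graph distance in the tree. -/
theorem covariance_bound_incomparable (pn : ℕ → ℝ)
    (hp0 : ∀ n, 0 < pn n) (hp1 : ∀ n, pn n < 1)
    (hlim : Filter.Tendsto pn Filter.atTop (nhds 0)) :
    ∃ N : ℕ, ∀ n ≥ N, ∀ u v : Vtx n,
      u.1.length < n → v.1.length < n →
      ¬ u.1 <+: v.1 → ¬ v.1 <+: u.1 →
      (treeMeasure n (pn n) (Xwet u ∩ Xwet v)).toReal ≤
          (treeMeasure n (pn n) (Xwet u)).toReal *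
            (treeMeasure n (pn n) (Xwet v)).toReal +
          (u.1.length + v.1.length - 2 * (lcp u.1 v.1).length : ℕ) *
            rho (pn n) (n - (lcp u.1 v.1).length) ∧
      (treeMeasure n (pn n) (Xwet u ∩ Xwet v)).toReal -
          (treeMeasure n (pn n) (Xwet u)).toReal *
            (treeMeasure n (pn n) (Xwet v)).toReal ≤
        (u.1.length + v.1.length - 2 * (lcp u.1 v.1).length : ℕ) *
          rho (pn n) (n - (lcp u.1 v.1).length) := by
  have hev : ∀ᶠ j in Filter.atTop, pn j < 1/5 :=
    hlim.eventually_lt_const (by norm_num)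
  obtain ⟨N, hN⟩ := Filter.eventually_atTop.mp hev
  refine ⟨N, fun n hn u v hun hvn huv hvu => ?_⟩
  have h0 : (0:ℝ) ≤ pn n := (hp0 n).le
  have h1 : pn n ≤ 1 := (hp1 n).le
  have h5 : pn n ≤ 1/5 := (hN n hn).le
  haveI := tree_prob (n := n) h0 h1
  set p := pn n with hpdef
  set μ := treeMeasure n p with hμdef
  set m := lcp u.1 v.1 with hmdef
  have hmu : m <+: u.1 := lcp_prefix_left _ _
  have hmv : m <+: v.1 := lcp_prefix_right _ _
  have hmlu : m.length < u.1.length := by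
    rcases lt_or_eq_of_le hmu.length_le with h | h
    · exact h
    · exfalso
      have h2 := hmu.eq_of_length h
      rw [h2] at hmv
      exact huv hmv
  have hmlv : m.length < v.1.length := by
    rcases lt_or_eq_of_le hmv.length_le with h | h
    · exact h
    · exfalso
      have h2 := hmv.eq_of_length h
      rw [h2] at hmu
      exact hvu hmu
  set k := n - m.length with hkdef
  set cu := u.1.take (m.length + 1) with hcudef
  set cv := v.1.take (m.length + 1) with hcvdef
  have hculen : cu.length = m.length + 1 := by
    rw [hcudef, List.length_take]; omega
  have hcvlen : cv.length = m.length + 1 := by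
    rw [hcvdef, List.length_take]; omega
  have hcupre : cu <+: u.1 := List.take_prefix _ _
  have hcvpre : cv <+: v.1 := List.take_prefix _ _
  have hcucv : cu ≠ cv := by
    intro h
    have hcv' : cu <+: v.1 := by rw [h]; exact hcvpre
    have h2 : cu <+: m := prefix_lcp cu u.1 v.1 hcupre hcv'
    have := h2.length_le
    omega
  set Au := {ω : Edg n → Bool | ∃ a : List Bool, a <+: u.1 ∧ m.length < a.length ∧
    ω ∈ YDl n a ∧ ω ∈ DNl n a u.1} with hAudef
  set Av := {ω : Edg n → Bool | ∃ a : List Bool, a <+: v.1 ∧ m.length < a.length ∧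
    ω ∈ YDl n a ∧ ω ∈ DNl n a v.1} with hAvdef
  set Bu := ⋃ i ∈ Finset.range (m.length + 1),
    (YDl n (m.take i) ∩ DNl n (m.take i) u.1) with hBudef
  set Bv := ⋃ i ∈ Finset.range (m.length + 1),
    (YDl n (m.take i) ∩ DNl n (m.take i) v.1) with hBvdef
  have hsplit : Xwet u ∩ Xwet v ⊆ (Au ∩ Av) ∪ (Bu ∪ Bv) := by
    rintro ω ⟨hx, hy⟩
    rcases xwet_decomp u m hmu hx with ha | hb
    · rcases xwet_decomp v m hmv hy with ha' | hb'
      · exact Or.inl ⟨ha, ha'⟩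
      · exact Or.inr (Or.inr hb')
    · exact Or.inr (Or.inl hb)
  have hAuAv : μ (Au ∩ Av) = μ Au * μ Av := by
    apply indep_Q h0 h1 (fun e : Edg n => cu <+: e.1)
    · rintro ω ω' hag ⟨a, hau, halen, ⟨w, hwl, haw, hup⟩, hdn⟩
      have hcua : cu <+: a := prefix_trans_of_le hcupre hau (by omega)
      refine ⟨a, hau, halen, ⟨w, hwl, haw, fun u' hu' hlt => ?_⟩, fun e' he' hlt => ?_⟩
      · rw [← hag u' (hcua.trans (prefix_trans_of_le haw hu' hlt.le))]
        exact hup u' hu' hlt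
      · rw [← hag e' (hcua.trans (prefix_trans_of_le hau he' hlt.le))]
        exact hdn e' he' hlt
    · rintro ω ω' hag ⟨a, hav, halen, ⟨w, hwl, haw, hup⟩, hdn⟩
      have hcva : cv <+: a := prefix_trans_of_le hcvpre hav (by omega)
      have hnq : ∀ x : List Bool, cv <+: x → ¬ cu <+: x := by
        intro x h2 h3
        exact hcucv ((prefix_trans_of_le h3 h2 (by omega)).eq_of_length (by omega))
      refine ⟨a, hav, halen, ⟨w, hwl, haw, fun u' hu' hlt => ?_⟩, fun e' he' hlt => ?_⟩
      · rw [← hag u' (hnq _ (hcva.trans (prefix_trans_of_le haw hu' hlt.le)))]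
        exact hup u' hu' hlt
      · rw [← hag e' (hnq _ (hcva.trans (prefix_trans_of_le hav he' hlt.le)))]
        exact hdn e' he' hlt
  have hAu_le : μ Au ≤ μ (Xwet u) := measure_mono (A_subset_xwet u m)
  have hAv_le : μ Av ≤ μ (Xwet v) := measure_mono (A_subset_xwet v m)
  have hBu_le : μ Bu ≤ ENNReal.ofReal (rho p k) := B_bound h0 h1 h5 u m hmu hmlu
  have hBv_le : μ Bv ≤ ENNReal.ofReal (rho p k) := B_bound h0 h1 h5 v m hmv hmlv
  have hmain : μ (Xwet u ∩ Xwet v) ≤ μ (Xwet u) * μ (Xwet v) +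
      (ENNReal.ofReal (rho p k) + ENNReal.ofReal (rho p k)) := by
    calc μ (Xwet u ∩ Xwet v) ≤ μ ((Au ∩ Av) ∪ (Bu ∪ Bv)) := measure_mono hsplit
      _ ≤ μ (Au ∩ Av) + μ (Bu ∪ Bv) := measure_union_le _ _
      _ ≤ μ (Au ∩ Av) + (μ Bu + μ Bv) := add_le_add le_rfl (measure_union_le _ _)
      _ ≤ μ (Xwet u) * μ (Xwet v) +
          (ENNReal.ofReal (rho p k) + ENNReal.ofReal (rho p k)) := by
          rw [hAuAv]
          exact add_le_add (mul_le_mul' hAu_le hAv_le) (add_le_add hBu_le hBv_le)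
  have hrk0 : 0 ≤ rho p k := (rho_mem h0 h1 k).1
  have hXu_ne : μ (Xwet u) ≠ ⊤ := measure_ne_top _ _
  have hXv_ne : μ (Xwet v) ≠ ⊤ := measure_ne_top _ _
  have hmul_ne : μ (Xwet u) * μ (Xwet v) ≠ ⊤ := ENNReal.mul_ne_top hXu_ne hXv_ne
  have hadd_ne : ENNReal.ofReal (rho p k) + ENNReal.ofReal (rho p k) ≠ ⊤ :=
    ENNReal.add_ne_top.mpr ⟨ENNReal.ofReal_ne_top, ENNReal.ofReal_ne_top⟩
  have ht := ENNReal.toReal_mono (ENNReal.add_ne_top.mpr ⟨hmul_ne, hadd_ne⟩) hmain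
  rw [ENNReal.toReal_add hmul_ne hadd_ne, ENNReal.toReal_mul,
    ENNReal.toReal_add ENNReal.ofReal_ne_top ENNReal.ofReal_ne_top,
    ENNReal.toReal_ofReal hrk0] at ht
  have hd2 : 2 ≤ u.1.length + v.1.length - 2 * m.length := by omega
  have hd2' : (2:ℝ) ≤ ((u.1.length + v.1.length - 2 * m.length : ℕ) : ℝ) := by
    exact_mod_cast hd2
  have hfin : 2 * rho p k ≤ ((u.1.length + v.1.length - 2 * m.length : ℕ) : ℝ) * rho p k :=
    mul_le_mul_of_nonneg_right hd2' hrk0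
  constructor
  · linarith
  · linarith
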